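/- Let W_n be the universal Coxeter group with normal-form length function ℓ. Suppose (u_1,…,u_k, s, u_k,…,u_1) and (v_1,…,v_l, s', v_l,…,v_1) are normal forms of two reflections t and t', and suppose that in some cancellation process applied to the concatenation of these normal forms, the central letter s is cancelled. Then ℓ(s u_k⋯u_1 v_1⋯v_l) < l - k; in particular k < l. -/

import Mathlib

/-- The elementary Hurwitz move `σ_i` on `n`-tuples of a group `G`
(0-indexed: acts on entries `i` and `i+1`). -/
def hmove (n : ℕ) (G : Type*) [Group G] (i : ℕ) (hi : i + 1 < n)
    (g : Fin n → G) : Fin n → G := fun j =>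
  if (j : ℕ) = i then g ⟨i, by omega⟩ * g ⟨i + 1, hi⟩ * (g ⟨i, by omega⟩)⁻¹
  else if (j : ℕ) = i + 1 then g ⟨i, by omega⟩
  else g j

/-- One elementary step of the Hurwitz action. -/
def hstep (n : ℕ) (G : Type*) [Group G] (a b : Fin n → G) : Prop :=
  ∃ (i : ℕ) (hi : i + 1 < n), b = hmove n G i hi a

/-- Braid relations: generators `σ_1, …, σ_{n-1}` indexed by `Fin (n-1)`. -/
def braidRels (n : ℕ) : Set (FreeGroup (Fin (n - 1))) :=
  { r | (∃ i j : Fin (n - 1), (i : ℕ) + 1 = (j : ℕ) ∧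
          r = FreeGroup.of i * FreeGroup.of j * FreeGroup.of i *
            (FreeGroup.of j * FreeGroup.of i * FreeGroup.of j)⁻¹) ∨
        (∃ i j : Fin (n - 1), (i : ℕ) + 1 < (j : ℕ) ∧
          r = FreeGroup.of i * FreeGroup.of j * (FreeGroup.of j * FreeGroup.of i)⁻¹) }

/-- The braid group `B_n`. -/
abbrev BraidGroup (n : ℕ) := PresentedGroup (braidRels n)

/-- Relations of the universal Coxeter group: each generator squares to 1. -/
def coxRels (n : ℕ) : Set (FreeGroup (Fin n)) :=
  { r | ∃ i, r = FreeGroup.of i * FreeGroup.of i }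

/-- The universal Coxeter group `W_n`. -/
abbrev UCox (n : ℕ) := PresentedGroup (coxRels n)

/-- The generator `s_i` of `W_n`. -/
def sgen {n : ℕ} (i : Fin n) : UCox n := PresentedGroup.of i

/-- The Coxeter element `c = s_1 ⋯ s_n`. -/
def coxElt (n : ℕ) : UCox n := (List.ofFn fun i => sgen i).prod

/-- The set `T` of reflections of `W_n`: conjugates of generators. -/
def Refl (n : ℕ) : Set (UCox n) := { t | ∃ w i, t = w * sgen i * w⁻¹ }

/-- `Red_T(c)`: `n`-tuples of reflections with product `c`. -/
def RedT (n : ℕ) : Set (Fin n → UCox n) :=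
  { t | (∀ i, t i ∈ Refl n) ∧ (List.ofFn t).prod = coxElt n }

/-- The set `R` of braid reflections of the free group: conjugates of generators. -/
def Rset (n : ℕ) : Set (FreeGroup (Fin n)) :=
  { r | ∃ w i, r = w * FreeGroup.of i * w⁻¹ }

/-- `g = f_1 ⋯ f_n`. -/
def gElt (n : ℕ) : FreeGroup (Fin n) := (List.ofFn fun i => FreeGroup.of i).prod

/-- `Red_R(g)`: `n`-tuples from `R` with product `g`. -/
def RedR (n : ℕ) : Set (Fin n → FreeGroup (Fin n)) :=
  { t | (∀ i, t i ∈ Rset n) ∧ (List.ofFn t).prod = gElt n }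

/-- The canonical projection `π : F_n → W_n`, `f_i ↦ s_i`. -/
def pr (n : ℕ) : FreeGroup (Fin n) →* UCox n := FreeGroup.lift fun i => sgen i

/-- Length of an element of `W_n`: the length of its normal form. -/
noncomputable def wordLength {n : ℕ} (w : UCox n) : ℕ :=
  sInf { m | ∃ l : List (Fin n),
    List.Chain' (· ≠ ·) l ∧ l.length = m ∧ (l.map sgen).prod = w }

theorem sgen_mul_self {n : ℕ} (i : Fin n) : sgen i * sgen i = 1 := by
  have h : ((QuotientGroup.mk (FreeGroup.of i * FreeGroup.of i) :
      PresentedGroup (coxRels n))) = 1 := by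
    apply (QuotientGroup.eq_one_iff _).mpr
    exact Subgroup.subset_normalClosure ⟨i, rfl⟩
  simp only [sgen, PresentedGroup.of]; exact h

theorem wordLength_le {n : ℕ} (l : List (Fin n)) (hl : List.Chain' (· ≠ ·) l) :
    wordLength ((l.map sgen).prod) ≤ l.length :=
  Nat.sInf_le ⟨l, hl, rfl, rfl⟩

theorem cancellation_aux (n : ℕ) (s0 : Fin n) :
    ∀ (u v : List (Fin n)),
    List.Chain' (· ≠ ·) (s0 :: u.reverse) →
    List.Chain' (· ≠ ·) v →
    (∀ m : List (Fin n), List.Chain' (· ≠ ·) m →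
      (m.map sgen).prod = ((u.reverse ++ v).map sgen).prod → m.head? = some s0) →
    wordLength (((s0 :: (u.reverse ++ v)).map sgen).prod) + u.length < v.length := by
  intro u
  induction u with
  | nil =>
    intro v hu hv hcancel
    have hhead : v.head? = some s0 := hcancel v hv (by simp)
    obtain ⟨v', rfl⟩ : ∃ v', v = s0 :: v' := by
      cases v with
      | nil => simp at hhead
      | cons b v' =>
        simp only [List.head?_cons, Option.some_inj] at hhead
        exact ⟨v', by rw [hhead]⟩
    have hv' : List.Chain' (· ≠ ·) v' := hv.tail
    have hprod : (((s0 :: (([] : List (Fin n)).reverse ++ s0 :: v')).map sgen).prod)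
        = ((v'.map sgen).prod) := by
      simp [← mul_assoc, sgen_mul_self]
    rw [hprod]
    have := wordLength_le v' hv'
    simp only [List.length_cons, List.length_nil]
    omega
  | cons a u' ih =>
    intro v hu hv hcancel
    have hrev : (a :: u').reverse = u'.reverse ++ [a] := by simp
    -- the reduced word u.reverse does not start with s0
    have hu_tail : List.Chain' (· ≠ ·) (u'.reverse ++ [a]) := by
      rw [hrev] at hu; exact hu.tail
    have hu_head_ne : ∀ x ∈ (u'.reverse ++ [a]).head?, s0 ≠ x := by
      rw [hrev] at hu
      exact (List.isChain_cons.mp hu).1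
    have hne_nil : (u'.reverse ++ [a]) ≠ [] := by simp
    have hhead_ne_s0 : (u'.reverse ++ [a]).head? ≠ some s0 := by
      cases hh : (u'.reverse ++ [a]).head? with
      | none => simp
      | some x =>
        have := hu_head_ne x (by rw [hh]; rfl)
        simp [this.symm]
    -- v is nonempty
    cases v with
    | nil =>
      exfalso
      exact hhead_ne_s0 (hcancel (u'.reverse ++ [a]) hu_tail (by simp [hrev]))
    | cons b v' =>
      -- b must equal a
      by_cases hab : a = b
      · subst hab
        have hu' : List.Chain' (· ≠ ·) (s0 :: u'.reverse) := by
          rw [hrev, ← List.cons_append] at hu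
          exact (List.isChain_append.mp hu).1
        have hv' : List.Chain' (· ≠ ·) v' := hv.tail
        have hprodeq : ((u'.reverse ++ v').map sgen).prod
            = (((a :: u').reverse ++ a :: v').map sgen).prod := by
          simp only [hrev, List.map_append, List.prod_append, List.map_cons,
            List.prod_cons, List.map_nil, List.prod_nil, mul_one, mul_assoc]
          rw [← mul_assoc (sgen a), sgen_mul_self, one_mul]
        have hcancel' : ∀ m : List (Fin n), List.Chain' (· ≠ ·) m →
            (m.map sgen).prod = ((u'.reverse ++ v').map sgen).prod →
            m.head? = some s0 := by
          intro m hm hp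
          exact hcancel m hm (by rw [hp, hprodeq])
        have := ih v' hu' hv' hcancel'
        have hpe : (((s0 :: ((a :: u').reverse ++ a :: v')).map sgen).prod)
            = (((s0 :: (u'.reverse ++ v')).map sgen).prod) := by
          simp only [hrev, List.map_append, List.map_cons, List.prod_cons,
            List.prod_append, List.map_nil, List.prod_nil, mul_one, mul_assoc]
          rw [← mul_assoc (sgen a), sgen_mul_self, one_mul]
        rw [hpe]
        simp only [List.length_cons] at *
        omega
      · exfalso
        -- then u.reverse ++ v is reduced, giving a contradiction
        have hchain : List.Chain' (· ≠ ·) ((u'.reverse ++ [a]) ++ b :: v') := by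
          refine List.isChain_append.mpr ?_
          refine ⟨hu_tail, hv, ?_⟩
          intro x hx y hy
          have hx' : x = a := by
            simp [List.getLast?_append] at hx
            exact hx.symm
          have hy' : y = b := by
            simp at hy
            exact hy.symm
          rw [hx', hy']; exact hab
        have := hcancel ((u'.reverse ++ [a]) ++ b :: v') hchain (by simp [hrev])
        have hh : ((u'.reverse ++ [a]) ++ b :: v').head? = (u'.reverse ++ [a]).head? := by
          rw [List.head?_append]
          cases hc : (u'.reverse ++ [a]).head? with
          | none => exact absurd (List.head?_eq_none_iff.mp hc) hne_nil
          | some x => rfl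
        rw [hh] at this
        exact hhead_ne_s0 this

/-- Key cancellation lemma: if `(s, u_k, …, u_1)` and `(v_1, …, v_l)` are normal forms
and every execution of the cancellation procedure on `(s, u_k, …, u_1, v_1, …, v_l)`
cancels the leading letter `s` (equivalently: the normal form of `u_k ⋯ u_1 v_1 ⋯ v_l`
starts with `s`), then `ℓ(s u_k ⋯ u_1 v_1 ⋯ v_l) < l - k`; in particular `k < l`. -/
theorem cancellation_length_bound (n : ℕ) (u v : List (Fin n)) (s0 : Fin n)
    (hu : List.Chain' (· ≠ ·) (s0 :: u.reverse))
    (hv : List.Chain' (· ≠ ·) v)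
    (hcancel : ∀ m : List (Fin n), List.Chain' (· ≠ ·) m →
      (m.map sgen).prod = ((u.reverse ++ v).map sgen).prod → m.head? = some s0) :
    wordLength (((s0 :: (u.reverse ++ v)).map sgen).prod) + u.length < v.length :=
  cancellation_aux n s0 u v hu hv hcancel
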